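/- arXiv:2209.10373 — 2 statements merged into one kernel-verified Lean document; each statement's English description precedes it below -/
import Mathlib

section
/- Let f(z) = Σ_{k=0}^m a_k z^k be a polynomial in one complex variable with no zeros in the open unit disk {z : |z| < 1}. For each n let c_n = min{‖pf − 1‖² : p ∈ ℂ[z], deg p ≤ n}, where ‖q‖² denotes the sum of the squared moduli of the coefficients of q. Then there is a constant C (depending on f) such that c_n ≤ C/n for all n ≥ 1. -/
noncomputable section

open Polynomial Finset

/-- Squared ℓ² norm of the coefficients of a one-variable polynomial. -/
def polyNormSq (q : Polynomial ℂ) : ℝ := ∑ k ∈ q.support, ‖q.coeff k‖ ^ 2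

def l1 (q : Polynomial ℂ) : ℝ := ∑ k ∈ q.support, ‖q.coeff k‖
def n2 (q : Polynomial ℂ) : ℝ := Real.sqrt (polyNormSq q)

lemma polyNormSq_nonneg (q : Polynomial ℂ) : 0 ≤ polyNormSq q :=
  Finset.sum_nonneg fun _ _ => by positivity

lemma n2_nonneg (q : Polynomial ℂ) : 0 ≤ n2 q := Real.sqrt_nonneg _

lemma sq_n2 (q : Polynomial ℂ) : n2 q ^ 2 = polyNormSq q :=
  Real.sq_sqrt (polyNormSq_nonneg q)

lemma polyNormSq_eq_sum (q : Polynomial ℂ) (s : Finset ℕ) (hs : q.support ⊆ s) :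
    polyNormSq q = ∑ k ∈ s, ‖q.coeff k‖ ^ 2 := by
  refine Finset.sum_subset hs fun k _ hk => ?_
  simp [Polynomial.notMem_support_iff.mp hk]

lemma l1_eq_sum (q : Polynomial ℂ) (s : Finset ℕ) (hs : q.support ⊆ s) :
    l1 q = ∑ k ∈ s, ‖q.coeff k‖ := by
  refine Finset.sum_subset hs fun k _ hk => ?_
  simp [Polynomial.notMem_support_iff.mp hk]

lemma l1_nonneg (q : Polynomial ℂ) : 0 ≤ l1 q :=
  Finset.sum_nonneg fun _ _ => norm_nonneg _

lemma sum_norm_coeff_le (q : Polynomial ℂ) (s : Finset ℕ) :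
    ∑ k ∈ s, ‖q.coeff k‖ ≤ l1 q := by
  have h1 : ∑ k ∈ s, ‖q.coeff k‖ = ∑ k ∈ s ∩ q.support, ‖q.coeff k‖ := by
    refine (Finset.sum_subset (Finset.inter_subset_left) fun k _ hk => ?_).symm
    by_cases h : q.coeff k = 0
    · simp [h]
    · exact absurd (Finset.mem_inter.mpr ⟨‹k ∈ s›, Polynomial.mem_support_iff.mpr h⟩) hk
  rw [h1]
  exact Finset.sum_le_sum_of_subset_of_nonneg Finset.inter_subset_right
    fun _ _ _ => norm_nonneg _

lemma n2_add_le (a b : Polynomial ℂ) : n2 (a + b) ≤ n2 a + n2 b := by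
  set N := max (max a.natDegree b.natDegree) (a+b).natDegree + 1 with hN
  set T : Polynomial ℂ → EuclideanSpace ℂ (Fin N) := fun q => WithLp.toLp 2 (fun i => q.coeff i) with hT
  have key : ∀ q : Polynomial ℂ, q.natDegree < N → n2 q = ‖T q‖ := by
    intro q hq
    rw [EuclideanSpace.norm_eq, n2, polyNormSq_eq_sum q (Finset.range N)
      (q.supp_subset_range (by omega))]
    congr 1
    exact (Fin.sum_univ_eq_sum_range (fun k => ‖q.coeff k‖ ^ 2) N).symm
  rw [key a (by omega), key b (by omega), key (a+b) (by omega)]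
  have : T (a + b) = T a + T b := by
    ext i
    show (a+b).coeff i = a.coeff i + b.coeff i
    simp
  rw [this]
  exact norm_add_le _ _

lemma n2_neg (a : Polynomial ℂ) : n2 (-a) = n2 a := by
  unfold n2 polyNormSq
  simp

lemma n2_sub_le (a b : Polynomial ℂ) : n2 (a - b) ≤ n2 a + n2 b := by
  rw [sub_eq_add_neg]
  calc n2 (a + -b) ≤ n2 a + n2 (-b) := n2_add_le a (-b)
  _ = n2 a + n2 b := by rw [n2_neg]

lemma young (g h : Polynomial ℂ) : polyNormSq (g * h) ≤ l1 g ^ 2 * polyNormSq h := by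
  set K := g.natDegree + h.natDegree + 1 with hK
  have hsupp : (g * h).support ⊆ Finset.range K := by
    intro k hk
    have := Polynomial.le_natDegree_of_mem_supp k hk
    have := Polynomial.natDegree_mul_le (p := g) (q := h)
    exact Finset.mem_range.mpr (by omega)
  rw [polyNormSq_eq_sum (g*h) (Finset.range K) hsupp]
  -- pointwise bound
  have step : ∀ k, ‖(g * h).coeff k‖ ^ 2 ≤
      l1 g * ∑ p ∈ Finset.HasAntidiagonal.antidiagonal k, ‖g.coeff p.1‖ * ‖h.coeff p.2‖ ^ 2 := by
    intro k
    have h1 : ‖(g * h).coeff k‖ ≤ ∑ p ∈ Finset.HasAntidiagonal.antidiagonal k, ‖g.coeff p.1‖ * ‖h.coeff p.2‖ := by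
      rw [Polynomial.coeff_mul]
      refine (norm_sum_le _ _).trans (le_of_eq ?_)
      exact Finset.sum_congr rfl fun p _ => norm_mul _ _
    have h2 : (∑ p ∈ Finset.HasAntidiagonal.antidiagonal k, ‖g.coeff p.1‖ * ‖h.coeff p.2‖) ^ 2 ≤
        (∑ p ∈ Finset.HasAntidiagonal.antidiagonal k, ‖g.coeff p.1‖) *
        (∑ p ∈ Finset.HasAntidiagonal.antidiagonal k, ‖g.coeff p.1‖ * ‖h.coeff p.2‖ ^ 2) := by
      have := Finset.sum_mul_sq_le_sq_mul_sq (Finset.HasAntidiagonal.antidiagonal k)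
        (fun p => Real.sqrt ‖g.coeff p.1‖) (fun p => Real.sqrt ‖g.coeff p.1‖ * ‖h.coeff p.2‖)
      have e1 : ∀ p : ℕ × ℕ, Real.sqrt ‖g.coeff p.1‖ * (Real.sqrt ‖g.coeff p.1‖ * ‖h.coeff p.2‖)
          = ‖g.coeff p.1‖ * ‖h.coeff p.2‖ := by
        intro p; rw [← mul_assoc, Real.mul_self_sqrt (norm_nonneg _)]
      have e2 : ∀ p : ℕ × ℕ, Real.sqrt ‖g.coeff p.1‖ ^ 2 = ‖g.coeff p.1‖ :=
        fun p => Real.sq_sqrt (norm_nonneg _)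
      have e3 : ∀ p : ℕ × ℕ, (Real.sqrt ‖g.coeff p.1‖ * ‖h.coeff p.2‖) ^ 2
          = ‖g.coeff p.1‖ * ‖h.coeff p.2‖ ^ 2 := by
        intro p; rw [mul_pow, e2]
      simpa only [e1, e2, e3] using this
    have h3 : ∑ p ∈ Finset.HasAntidiagonal.antidiagonal k, ‖g.coeff p.1‖ ≤ l1 g := by
      rw [Finset.Nat.sum_antidiagonal_eq_sum_range_succ_mk]
      exact sum_norm_coeff_le g _
    calc ‖(g * h).coeff k‖ ^ 2
        ≤ (∑ p ∈ Finset.HasAntidiagonal.antidiagonal k, ‖g.coeff p.1‖ * ‖h.coeff p.2‖) ^ 2 := by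
          exact pow_le_pow_left₀ (norm_nonneg _) h1 2
      _ ≤ (∑ p ∈ Finset.HasAntidiagonal.antidiagonal k, ‖g.coeff p.1‖) *
          (∑ p ∈ Finset.HasAntidiagonal.antidiagonal k, ‖g.coeff p.1‖ * ‖h.coeff p.2‖ ^ 2) := h2
      _ ≤ l1 g * ∑ p ∈ Finset.HasAntidiagonal.antidiagonal k, ‖g.coeff p.1‖ * ‖h.coeff p.2‖ ^ 2 := by
          refine mul_le_mul_of_nonneg_right h3 ?_
          exact Finset.sum_nonneg fun p _ => by positivity
  calc ∑ k ∈ Finset.range K, ‖(g*h).coeff k‖ ^ 2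
      ≤ ∑ k ∈ Finset.range K,
          l1 g * ∑ p ∈ Finset.HasAntidiagonal.antidiagonal k, ‖g.coeff p.1‖ * ‖h.coeff p.2‖ ^ 2 :=
        Finset.sum_le_sum fun k _ => step k
    _ = l1 g * ∑ k ∈ Finset.range K,
          ∑ p ∈ Finset.HasAntidiagonal.antidiagonal k, ‖g.coeff p.1‖ * ‖h.coeff p.2‖ ^ 2 := by
        rw [Finset.mul_sum]
    _ ≤ l1 g * ∑ p ∈ Finset.range K ×ˢ Finset.range K,
          ‖g.coeff p.1‖ * ‖h.coeff p.2‖ ^ 2 := by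
        refine mul_le_mul_of_nonneg_left ?_ (l1_nonneg g)
        have hdisj : (↑(Finset.range K) : Set ℕ).PairwiseDisjoint Finset.HasAntidiagonal.antidiagonal := by
          intro i _ j _ hij
          simp only [Finset.disjoint_left]
          intro p hp hq
          exact hij ((Finset.HasAntidiagonal.mem_antidiagonal.mp hp).symm.trans
            (Finset.HasAntidiagonal.mem_antidiagonal.mp hq))
        rw [← Finset.sum_biUnion hdisj]
        refine Finset.sum_le_sum_of_subset_of_nonneg ?_ (fun p _ _ => by positivity)
        intro p hp
        obtain ⟨k, hk, hpk⟩ := Finset.mem_biUnion.mp hp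
        have hpk' := Finset.HasAntidiagonal.mem_antidiagonal.mp hpk
        have hkK := Finset.mem_range.mp hk
        exact Finset.mem_product.mpr
          ⟨Finset.mem_range.mpr (by omega), Finset.mem_range.mpr (by omega)⟩
    _ = l1 g * ((∑ i ∈ Finset.range K, ‖g.coeff i‖) *
          (∑ j ∈ Finset.range K, ‖h.coeff j‖ ^ 2)) := by
        congr 1
        rw [Finset.sum_mul_sum]
        exact Finset.sum_product _ _ (fun p : ℕ × ℕ => ‖g.coeff p.1‖ * ‖h.coeff p.2‖ ^ 2)
    _ ≤ l1 g * (l1 g * polyNormSq h) := by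
        refine mul_le_mul_of_nonneg_left ?_ (l1_nonneg g)
        rw [← polyNormSq_eq_sum h (Finset.range K) (h.supp_subset_range (by omega))]
        exact mul_le_mul_of_nonneg_right (sum_norm_coeff_le g _) (polyNormSq_nonneg h)
    _ = l1 g ^ 2 * polyNormSq h := by ring

def gp (β : ℂ) (N : ℕ) : Polynomial ℂ :=
  ∑ k ∈ Finset.range (N+2), Polynomial.C (β^k / (N+2)) * Polynomial.X ^ k

def qp (β : ℂ) (N : ℕ) : Polynomial ℂ :=
  ∑ k ∈ Finset.range (N+1), Polynomial.C (β^k * ((N:ℂ)+1-k) / (N+2)) * Polynomial.X ^ k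

lemma gp_coeff (β : ℂ) (N j : ℕ) :
    (gp β N).coeff j = if j < N + 2 then β^j / (N+2) else 0 := by
  rw [gp, Polynomial.finset_sum_coeff]
  simp only [Polynomial.coeff_C_mul, Polynomial.coeff_X_pow, mul_ite, mul_one, mul_zero]
  rw [Finset.sum_ite_eq (Finset.range (N+2)) j (fun k => β^k / (N+2))]
  simp [Finset.mem_range]

lemma gp_support (β : ℂ) (N : ℕ) : (gp β N).support ⊆ Finset.range (N+2) := by
  intro j hj
  have h := Polynomial.mem_support_iff.mp hj
  rw [gp_coeff] at h
  rw [Finset.mem_range]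
  by_contra hc
  simp [if_neg hc] at h

lemma qp_coeff (β : ℂ) (N j : ℕ) :
    (qp β N).coeff j = if j < N + 1 then β^j * ((N:ℂ)+1-j) / (N+2) else 0 := by
  rw [qp, Polynomial.finset_sum_coeff]
  simp only [Polynomial.coeff_C_mul, Polynomial.coeff_X_pow, mul_ite, mul_one, mul_zero]
  rw [Finset.sum_ite_eq (Finset.range (N+1)) j (fun k => β^k * ((N:ℂ)+1-k) / (N+2))]
  simp [Finset.mem_range]

lemma qp_natDegree_le (β : ℂ) (N : ℕ) : (qp β N).natDegree ≤ N := by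
  refine Polynomial.natDegree_sum_le_of_forall_le _ _ fun k hk => ?_
  refine le_trans (Polynomial.natDegree_C_mul_le _ _) ?_
  rw [Polynomial.natDegree_X_pow]
  exact Nat.lt_succ_iff.mp (Finset.mem_range.mp hk)

-- scalar telescoping identity
lemma scalar_id (w : ℂ) (N : ℕ) :
    (∑ k ∈ Finset.range (N+1), ((N:ℂ)+1-k) * w^k) * (1 - w)
      = ((N:ℂ)+2) - ∑ k ∈ Finset.range (N+2), w^k := by
  induction N with
  | zero => simp [Finset.sum_range_succ]; ring
  | succ n ih =>
    push_cast
    have e1 : ∀ k ∈ Finset.range (n+2), ((n:ℂ)+1+1-k) * w^k = ((n:ℂ)+1-k) * w^k + w^k :=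
      fun k _ => by ring
    rw [Finset.sum_congr rfl e1, Finset.sum_add_distrib]
    have e2 : ∑ k ∈ Finset.range (n+2), ((n:ℂ)+1-k) * w^k
        = ∑ k ∈ Finset.range (n+1), ((n:ℂ)+1-k) * w^k := by
      rw [Finset.sum_range_succ]
      push_cast
      simp
    have geom : (∑ k ∈ Finset.range (n+2), w^k) * (1 - w) = 1 - w^(n+2) := by
      have := geom_sum_mul w (n+2)
      linear_combination -this
    rw [e2, add_mul, ih, geom, Finset.sum_range_succ (fun k => w^k) (n+2)]
    push_cast
    ring

lemma Ncast_ne (N : ℕ) : ((N:ℂ)+2) ≠ 0 := by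
  have h : ((N+2:ℕ):ℂ) ≠ 0 := Nat.cast_ne_zero.mpr (by omega)
  push_cast at h
  exact h

lemma key_id (β : ℂ) (N : ℕ) :
    qp β N * (1 - Polynomial.C β * Polynomial.X) = 1 - gp β N := by
  apply Polynomial.funext
  intro z
  simp only [Polynomial.eval_mul, Polynomial.eval_sub, Polynomial.eval_one, Polynomial.eval_C,
    Polynomial.eval_X, qp, gp, Polynomial.eval_finset_sum, Polynomial.eval_pow]
  have e1 : ∀ k ∈ Finset.range (N+1),
      β^k*((N:ℂ)+1-k)/((N:ℂ)+2)*z^k = ((N:ℂ)+1-(k:ℂ))*(β*z)^k / ((N:ℂ)+2) :=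
    fun k _ => by rw [mul_pow]; ring
  have e2 : ∀ k ∈ Finset.range (N+2),
      β^k/((N:ℂ)+2)*z^k = (β*z)^k / ((N:ℂ)+2) :=
    fun k _ => by rw [mul_pow]; ring
  rw [Finset.sum_congr rfl e1, Finset.sum_congr rfl e2, ← Finset.sum_div, ← Finset.sum_div]
  have hs := scalar_id (β * z) N
  have hN2 := Ncast_ne N
  field_simp
  linear_combination hs

lemma gp_coeff_norm_le (β : ℂ) (N : ℕ) (hβ : ‖β‖ ≤ 1) (j : ℕ) :
    ‖(gp β N).coeff j‖ ≤ 1/((N:ℝ)+2) := by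
  have hN : (0:ℝ) < (N:ℝ)+2 := by positivity
  rw [gp_coeff]
  by_cases h : j < N + 2
  · rw [if_pos h, norm_div, norm_pow]
    have hden : ‖(N:ℂ)+2‖ = (N:ℝ)+2 := by
      have e : ((N:ℂ)+2) = ((N+2:ℕ):ℂ) := by push_cast; ring
      rw [e, Complex.norm_natCast]; push_cast; ring
    rw [hden]
    gcongr
    exact pow_le_one₀ (norm_nonneg β) hβ
  · rw [if_neg h]; simp; positivity

lemma l1_gp_le (β : ℂ) (N : ℕ) (hβ : ‖β‖ ≤ 1) : l1 (gp β N) ≤ 1 := by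
  have hN : (0:ℝ) < (N:ℝ)+2 := by positivity
  rw [l1_eq_sum _ _ (gp_support β N)]
  calc ∑ k ∈ Finset.range (N+2), ‖(gp β N).coeff k‖
      ≤ ∑ _k ∈ Finset.range (N+2), 1/((N:ℝ)+2) :=
        Finset.sum_le_sum fun k _ => gp_coeff_norm_le β N hβ k
    _ = (N+2 : ℝ) * (1/((N:ℝ)+2)) := by
        rw [Finset.sum_const, Finset.card_range, nsmul_eq_mul]; push_cast; ring
    _ = 1 := by field_simp

lemma polyNormSq_gp_le (β : ℂ) (N : ℕ) (hβ : ‖β‖ ≤ 1) :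
    polyNormSq (gp β N) ≤ 1/((N:ℝ)+2) := by
  have hN : (0:ℝ) < (N:ℝ)+2 := by positivity
  rw [polyNormSq_eq_sum _ _ (gp_support β N)]
  calc ∑ k ∈ Finset.range (N+2), ‖(gp β N).coeff k‖ ^ 2
      ≤ ∑ _k ∈ Finset.range (N+2), (1/((N:ℝ)+2))^2 := by
        refine Finset.sum_le_sum fun k _ => ?_
        exact pow_le_pow_left₀ (norm_nonneg _) (gp_coeff_norm_le β N hβ k) 2
    _ = (N+2 : ℝ) * (1/((N:ℝ)+2))^2 := by
        rw [Finset.sum_const, Finset.card_range, nsmul_eq_mul]; push_cast; ring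
    _ = 1/((N:ℝ)+2) := by field_simp

lemma n2_gp_le (β : ℂ) (N : ℕ) (hβ : ‖β‖ ≤ 1) :
    n2 (gp β N) ≤ 1 / Real.sqrt ((N:ℝ)+2) := by
  have h := Real.sqrt_le_sqrt (polyNormSq_gp_le β N hβ)
  rw [n2]
  refine h.trans (le_of_eq ?_)
  rw [one_div, one_div, Real.sqrt_inv]

lemma n2_mul_le (g h : Polynomial ℂ) : n2 (g * h) ≤ l1 g * n2 h := by
  have h1 : n2 (g * h) ^ 2 ≤ (l1 g * n2 h) ^ 2 := by
    rw [sq_n2, mul_pow, sq_n2]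
    exact young g h
  have h2 : 0 ≤ l1 g * n2 h := mul_nonneg (l1_nonneg g) (n2_nonneg h)
  exact (pow_le_pow_iff_left₀ (n2_nonneg _) h2 (by norm_num)).mp h1

lemma prod_bound (N : ℕ) (s : Multiset ℂ) (hs : ∀ β ∈ s, ‖β‖ ≤ 1) :
    n2 ((s.map (fun β => 1 - gp β N)).prod - 1)
      ≤ ((2:ℝ)^(Multiset.card s) - 1) / Real.sqrt ((N:ℝ)+2) := by
  induction s using Multiset.induction_on with
  | empty =>
    simp only [Multiset.map_zero, Multiset.prod_zero, sub_self, Multiset.card_zero, pow_zero]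
    have : n2 0 = 0 := by simp [n2, polyNormSq]
    rw [this]
    simp
  | cons β t ih =>
    have hβ : ‖β‖ ≤ 1 := hs β (Multiset.mem_cons_self β t)
    have ht : ∀ γ ∈ t, ‖γ‖ ≤ 1 := fun γ hγ => hs γ (Multiset.mem_cons_of_mem hγ)
    set P := (t.map (fun β => 1 - gp β N)).prod with hP
    have hsqrt : 0 < Real.sqrt ((N:ℝ)+2) := Real.sqrt_pos.mpr (by positivity)
    have hmap : ((β ::ₘ t).map (fun β => 1 - gp β N)).prod = (1 - gp β N) * P := by
      rw [Multiset.map_cons, Multiset.prod_cons]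
    have hid : (1 - gp β N) * P - 1 = ((P - 1) - gp β N) - gp β N * (P - 1) := by ring
    have hD := ih ht
    have step1 : n2 ((1 - gp β N) * P - 1)
        ≤ n2 (P - 1) + n2 (gp β N) + n2 (gp β N * (P - 1)) := by
      rw [hid]
      calc n2 (((P - 1) - gp β N) - gp β N * (P - 1))
          ≤ n2 ((P - 1) - gp β N) + n2 (gp β N * (P - 1)) := n2_sub_le _ _
        _ ≤ (n2 (P - 1) + n2 (gp β N)) + n2 (gp β N * (P - 1)) := by
            have := n2_sub_le (P - 1) (gp β N); linarith
    have step2 : n2 (gp β N * (P - 1)) ≤ n2 (P - 1) := by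
      calc n2 (gp β N * (P - 1)) ≤ l1 (gp β N) * n2 (P - 1) := n2_mul_le _ _
        _ ≤ 1 * n2 (P - 1) :=
            mul_le_mul_of_nonneg_right (l1_gp_le β N hβ) (n2_nonneg _)
        _ = n2 (P - 1) := one_mul _
    rw [hmap]
    have hcard : Multiset.card (β ::ₘ t) = Multiset.card t + 1 := Multiset.card_cons β t
    rw [hcard]
    have hgp := n2_gp_le β N hβ
    calc n2 ((1 - gp β N) * P - 1)
        ≤ n2 (P - 1) + n2 (gp β N) + n2 (gp β N * (P - 1)) := step1
      _ ≤ 2 * n2 (P - 1) + 1 / Real.sqrt ((N:ℝ)+2) := by linarith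
      _ ≤ 2 * (((2:ℝ)^(Multiset.card t) - 1) / Real.sqrt ((N:ℝ)+2))
            + 1 / Real.sqrt ((N:ℝ)+2) := by linarith
      _ = ((2:ℝ)^(Multiset.card t + 1) - 1) / Real.sqrt ((N:ℝ)+2) := by
          rw [pow_succ]
          field_simp
          ring

/-- If `f` has no zeros in the open unit disk, then the optimal approximation errors
`c_n = min {‖pf − 1‖² : deg p ≤ n}` satisfy `c_n ≤ C/n` for all `n ≥ 1`. -/
theorem opa_one_variable (f : Polynomial ℂ)
    (hf : ∀ z : ℂ, ‖z‖ < 1 → Polynomial.eval z f ≠ 0) :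
    ∃ C : ℝ, ∀ n : ℕ, 1 ≤ n →
      sInf {t : ℝ | ∃ p : Polynomial ℂ, p.natDegree ≤ n ∧ t = polyNormSq (p * f - 1)}
        ≤ C / n := by
  have hf0 : Polynomial.eval 0 f ≠ 0 := hf 0 (by norm_num)
  have hfne : f ≠ 0 := fun h => hf0 (by simp [h])
  set m := f.natDegree with hm
  set R := f.roots with hR
  have hcard : Multiset.card R = m := splits_iff_card_roots.mp (IsAlgClosed.splits f)
  have hroots1 : ∀ α ∈ R, 1 ≤ ‖α‖ := by
    intro α hα
    by_contra h
    exact hf α (lt_of_not_ge h) ((Polynomial.mem_roots'.mp hα).2)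
  have hroots0 : ∀ α ∈ R, α ≠ 0 := by
    intro α hα h0
    have := hroots1 α hα
    rw [h0] at this; simp at this; linarith
  set B := R.map (·⁻¹) with hB
  have hB1 : ∀ β ∈ B, ‖β‖ ≤ 1 := by
    intro β hβ
    obtain ⟨α, hα, rfl⟩ := Multiset.mem_map.mp hβ
    rw [norm_inv]
    exact inv_le_one_of_one_le₀ (hroots1 α hα)
  have hBcard : Multiset.card B = m := by rw [hB, Multiset.card_map, hcard]
  -- factorization
  have hfact0 : f = Polynomial.C f.leadingCoeff * (R.map fun α => X - Polynomial.C α).prod :=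
    (C_leadingCoeff_mul_prod_multiset_X_sub_C hcard).symm
  have hmapeq : R.map (fun α => X - Polynomial.C α)
      = R.map (fun α => Polynomial.C (-α) * (1 - Polynomial.C α⁻¹ * X)) := by
    refine Multiset.map_congr rfl fun α hα => ?_
    have hα0 := hroots0 α hα
    rw [mul_sub, mul_one, ← mul_assoc, ← Polynomial.C_mul]
    rw [neg_mul, mul_inv_cancel₀ hα0]
    simp [sub_eq_add_neg]
    ring
  set c := f.leadingCoeff * (R.map (fun α => -α)).prod with hc
  have hfact : f = Polynomial.C c * (B.map fun β => 1 - Polynomial.C β * X).prod := by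
    rw [hfact0, hmapeq, Multiset.prod_map_mul, hc, Polynomial.C_mul]
    have e1 : (R.map fun α => Polynomial.C (-α)).prod
        = Polynomial.C ((R.map (fun α => -α)).prod) := by
      rw [map_multiset_prod, Multiset.map_map]
      rfl
    have e2 : (R.map fun α => 1 - Polynomial.C α⁻¹ * X)
        = B.map fun β => 1 - Polynomial.C β * X := by
      rw [hB, Multiset.map_map]
      rfl
    rw [e1, e2]
    ring
  have hc0 : c ≠ 0 := by
    intro h
    apply hf0
    rw [hfact, h]
    simp
  refine ⟨(m : ℝ) * ((2:ℝ)^m - 1)^2, ?_⟩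
  intro n hn
  set N := n / m with hN
  set p := Polynomial.C c⁻¹ * (B.map (fun β => qp β N)).prod with hp
  have hdeg : p.natDegree ≤ n := by
    calc p.natDegree ≤ (Polynomial.C c⁻¹).natDegree
          + ((B.map (fun β => qp β N)).prod).natDegree := Polynomial.natDegree_mul_le
      _ = ((B.map (fun β => qp β N)).prod).natDegree := by
          rw [Polynomial.natDegree_C, zero_add]
      _ ≤ ((B.map (fun β => qp β N)).map Polynomial.natDegree).sum :=
          Polynomial.natDegree_multiset_prod_le _
      _ ≤ Multiset.card ((B.map (fun β => qp β N)).map Polynomial.natDegree) • N := by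
          refine Multiset.sum_le_card_nsmul _ _ fun x hx => ?_
          obtain ⟨q, hq, rfl⟩ := Multiset.mem_map.mp hx
          obtain ⟨β, hβ, rfl⟩ := Multiset.mem_map.mp hq
          exact qp_natDegree_le β N
      _ = m * N := by rw [Multiset.card_map, Multiset.card_map, hBcard, smul_eq_mul]
      _ = N * m := mul_comm m N
      _ ≤ n := hN ▸ Nat.div_mul_le_self n m
  have hpf : p * f = ((B.map fun β => 1 - gp β N)).prod := by
    rw [hp]
    conv_lhs => rw [hfact]
    have e3 : Polynomial.C c⁻¹ * (B.map (fun β => qp β N)).prod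
        * (Polynomial.C c * (B.map fun β => 1 - Polynomial.C β * X).prod)
        = (Polynomial.C c⁻¹ * Polynomial.C c)
          * ((B.map (fun β => qp β N)).prod * (B.map fun β => 1 - Polynomial.C β * X).prod) := by
      ring
    rw [e3, ← Polynomial.C_mul, inv_mul_cancel₀ hc0, Polynomial.C_1, one_mul,
      ← Multiset.prod_map_mul]
    exact congrArg Multiset.prod (Multiset.map_congr rfl fun β _ => key_id β N)
  have hbdd : BddBelow {t : ℝ | ∃ q : Polynomial ℂ, q.natDegree ≤ n ∧ t = polyNormSq (q * f - 1)} := by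
    refine ⟨0, fun t ht => ?_⟩
    obtain ⟨q, _, rfl⟩ := ht
    exact polyNormSq_nonneg _
  have hmem : polyNormSq (p * f - 1) ∈
      {t : ℝ | ∃ q : Polynomial ℂ, q.natDegree ≤ n ∧ t = polyNormSq (q * f - 1)} :=
    ⟨p, hdeg, rfl⟩
  refine le_trans (csInf_le hbdd hmem) ?_
  -- bound the candidate value
  have hb := prod_bound N B hB1
  rw [hBcard] at hb
  rw [← hpf] at hb
  have hNpos : (0:ℝ) < (N:ℝ) + 2 := by positivity
  have hval : polyNormSq (p * f - 1) ≤ ((2:ℝ)^m - 1)^2 / ((N:ℝ)+2) := by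
    rw [← sq_n2]
    calc n2 (p * f - 1) ^ 2 ≤ (((2:ℝ)^m - 1) / Real.sqrt ((N:ℝ)+2))^2 :=
          pow_le_pow_left₀ (n2_nonneg _) hb 2
      _ = ((2:ℝ)^m - 1)^2 / ((N:ℝ)+2) := by
          rw [div_pow, Real.sq_sqrt (le_of_lt hNpos)]
  refine hval.trans ?_
  by_cases hm0 : m = 0
  · simp [hm0]
  · have hm1 : 1 ≤ m := Nat.one_le_iff_ne_zero.mpr hm0
    have hmodlt : n % m < m := Nat.mod_lt _ hm1
    have hdm : m * N + n % m = n := Nat.div_add_mod n m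
    have hexp : m * (N + 2) = m * N + 2 * m := by ring
    have hnle : n ≤ m * (N + 2) := by omega
    have hnpos : (0:ℝ) < (n:ℝ) := by exact_mod_cast hn
    have hnle' : (n:ℝ) ≤ (m:ℝ) * ((N:ℝ) + 2) := by exact_mod_cast hnle
    rw [div_le_div_iff₀ hNpos hnpos]
    have hsq : (0:ℝ) ≤ ((2:ℝ)^m - 1)^2 := sq_nonneg _
    nlinarith [mul_le_mul_of_nonneg_left hnle' hsq]
end
end

section
/- Let f be a free polynomial in d noncommuting indeterminates and suppose (p_n) is a sequence of free polynomials such that ‖p_n f − 1‖₂ → 0 as n → ∞. Then f is nonsingular in the row ball: for every k ≥ 1 and every d-tuple X of k×k complex matrices with ‖X₁X₁* + ⋯ + X_dX_d*‖ < 1, the matrix f(X) is invertible. -/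
open scoped BigOperators Kronecker
open Matrix

noncomputable section

/-- Words in the letters `1,…,d`. -/
abbrev Word (d : ℕ) := FreeMonoid (Fin d)

/-- The free algebra `ℂ⟨x₁,…,x_d⟩`, realized as the monoid algebra of the free monoid. -/
abbrev FreePoly (d : ℕ) := MonoidAlgebra ℂ (Word d)

/-- Squared ℓ² norm of the coefficients of a free polynomial. -/
def FreePoly.normSq {d : ℕ} (p : FreePoly d) : ℝ := p.coeff.sum fun _ c => ‖c‖ ^ 2

/-- ℓ² norm of the coefficients of a free polynomial. -/
def FreePoly.norm2 {d : ℕ} (p : FreePoly d) : ℝ := Real.sqrt p.normSq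

/-- `p` has degree at most `n`. -/
def FreePoly.degLE {d : ℕ} (p : FreePoly d) (n : ℕ) : Prop :=
  ∀ w ∈ p.coeff.support, w.toList.length ≤ n

/-- Evaluation of a word at a `d`-tuple of `k × k` matrices: `X^w`. -/
def wordEval {d k : ℕ} (X : Fin d → Matrix (Fin k) (Fin k) ℂ) (w : Word d) :
    Matrix (Fin k) (Fin k) ℂ :=
  (w.toList.map X).prod

/-- Evaluation of a free polynomial at a matrix tuple. -/
def FreePoly.eval {d k : ℕ} (p : FreePoly d) (X : Fin d → Matrix (Fin k) (Fin k) ℂ) :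
    Matrix (Fin k) (Fin k) ℂ :=
  p.coeff.sum fun w c => c • wordEval X w

/-- `k×k`-matrix-valued free polynomials `M_k(ℂ⟨x⟩)`. -/
abbrev MatPoly (d k : ℕ) := Matrix (Fin k) (Fin k) (FreePoly d)

/-- Squared ℓ² (Frobenius) norm of the coefficients of a matrix free polynomial. -/
def MatPoly.normSq {d k : ℕ} (F : MatPoly d k) : ℝ := ∑ i, ∑ j, (F i j).normSq

def MatPoly.norm2 {d k : ℕ} (F : MatPoly d k) : ℝ := Real.sqrt F.normSq

def MatPoly.degLE {d k : ℕ} (F : MatPoly d k) (n : ℕ) : Prop := ∀ i j, (F i j).degLE n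

/-- Evaluation of a matrix free polynomial at an `m×m` matrix tuple,
`F(X) = Σ_w A_w ⊗ X^w ∈ M_k(ℂ) ⊗ M_m(ℂ)`. -/
def MatPoly.eval {d k m : ℕ} (F : MatPoly d k) (X : Fin d → Matrix (Fin m) (Fin m) ℂ) :
    Matrix (Fin k × Fin m) (Fin k × Fin m) ℂ :=
  Matrix.of fun p q => ((F p.1 q.1).eval X) p.2 q.2

/-- The homogeneous linear pencil `Ax = A₁x₁ + ⋯ + A_d x_d` as a matrix free polynomial. -/
def pencil {d m : ℕ} (A : Fin d → Matrix (Fin m) (Fin m) ℂ) : MatPoly d m :=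
  Matrix.of fun i j => ∑ l, MonoidAlgebra.single (FreeMonoid.of l) (A l i j)

/-- Operator norm of a matrix, acting on Euclidean space. -/
def opNorm {ι : Type} [Fintype ι] [DecidableEq ι] (M : Matrix ι ι ℂ) : ℝ :=
  ‖Matrix.toEuclideanCLM (𝕜 := ℂ) M‖

/-- `X` is a strict row contraction: `‖X₁X₁* + ⋯ + X_dX_d*‖ < 1`. -/
def IsStrictRowContraction {d k : ℕ} (X : Fin d → Matrix (Fin k) (Fin k) ℂ) : Prop :=
  opNorm (∑ j, X j * (X j)ᴴ) < 1

/-- The column norm `‖A‖_col = ‖Σ Aⱼ*Aⱼ‖^{1/2}`. -/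
def colNorm {d m : ℕ} (A : Fin d → Matrix (Fin m) (Fin m) ℂ) : ℝ :=
  Real.sqrt (opNorm (∑ j, (A j)ᴴ * A j))

/-- The completely positive map `Ψ_X : T ↦ Σ Xⱼ T Xⱼ*`. -/
def Psi {d n : ℕ} (X : Fin d → Matrix (Fin n) (Fin n) ℂ) :
    Module.End ℂ (Matrix (Fin n) (Fin n) ℂ) where
  toFun T := ∑ j, X j * T * (X j)ᴴ
  map_add' T S := by
    simp [Matrix.mul_add, Matrix.add_mul, Finset.sum_add_distrib]
  map_smul' c T := by
    simp [Matrix.mul_smul, Matrix.smul_mul, Finset.smul_sum]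

/-- The outer spectral radius `ρ(X)`: the square root of the spectral radius of `Ψ_X`. -/
def outerRadius {d n : ℕ} (X : Fin d → Matrix (Fin n) (Fin n) ℂ) : ℝ :=
  Real.sqrt (sSup ((fun μ : ℂ => ‖μ‖) '' spectrum ℂ (Psi X)))

/-- The `N × N` dilation `diag(A, I)` of a `k × k` matrix polynomial. -/
def dilate {d k : ℕ} (A : MatPoly d k) (N : ℕ) : MatPoly d N :=
  Matrix.of fun i j =>
    if hi : (i : ℕ) < k then
      (if hj : (j : ℕ) < k then A ⟨i, hi⟩ ⟨j, hj⟩ else 0)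
    else if (i : ℕ) = (j : ℕ) then 1 else 0

/-- `A` and `B` (square matrix polynomials of possibly different sizes) are stably
associated: `P · diag(A, I) · Q = diag(B, I)` for some invertible `P, Q ∈ GL_N(ℂ⟨x⟩)`. -/
def StablyAssociated {d k l : ℕ} (A : MatPoly d k) (B : MatPoly d l) : Prop :=
  ∃ N : ℕ, k ≤ N ∧ l ≤ N ∧ ∃ P Q : MatPoly d N, IsUnit P ∧ IsUnit Q ∧
    P * dilate A N * Q = dilate B N

/-- A tuple of matrices is irreducible if it generates the full matrix algebra. -/
def IrreducibleTuple {d : ℕ} {ι : Type} [Fintype ι] [DecidableEq ι]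
    (A : Fin d → Matrix ι ι ℂ) : Prop :=
  Algebra.adjoin ℂ (Set.range A) = ⊤

/-- A regular, non-invertible matrix polynomial is an atom if it is not a product of two
non-invertible matrix polynomials. -/
def IsAtomMP {d k : ℕ} (F : MatPoly d k) : Prop :=
  IsRegular F ∧ ¬IsUnit F ∧ ∀ G H : MatPoly d k, F = G * H → IsUnit G ∨ IsUnit H

/-- `π_n(Mx) = Σ_{k=0}^n (1 − (k+1)/(n+2)) (Mx)^k`. -/
def piMx {d m : ℕ} (n : ℕ) (M : Fin d → Matrix (Fin m) (Fin m) ℂ) : MatPoly d m :=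
  ∑ k ∈ Finset.range (n + 1), (1 - ((k : ℂ) + 1) / ((n : ℂ) + 2)) • pencil M ^ k

section AuxProof

open scoped InnerProductSpace
open ContinuousLinearMap

variable {d k : ℕ}

/-- `toEuclideanCLM` specialized. -/
abbrev ECLM {k : ℕ} : Matrix (Fin k) (Fin k) ℂ ≃⋆ₐ[ℂ]
    (EuclideanSpace ℂ (Fin k) →L[ℂ] EuclideanSpace ℂ (Fin k)) :=
  Matrix.toEuclideanCLM (𝕜 := ℂ)

lemma opNorm_eq (M : Matrix (Fin k) (Fin k) ℂ) : opNorm M = ‖ECLM M‖ := rfl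

lemma wordEval_of_mul (X : Fin d → Matrix (Fin k) (Fin k) ℂ) (j : Fin d) (w : Word d) :
    wordEval X (FreeMonoid.of j * w) = X j * wordEval X w := by
  simp [wordEval, FreeMonoid.toList_of_mul]

lemma norm_ECLM_ct_apply_sq (M : Matrix (Fin k) (Fin k) ℂ)
    (ξ : EuclideanSpace ℂ (Fin k)) :
    ‖ECLM Mᴴ ξ‖ ^ 2 = RCLike.re (⟪(ECLM (M * Mᴴ)) ξ, ξ⟫_ℂ) := by
  have h1 : ECLM (M * Mᴴ) = star (ECLM Mᴴ) * ECLM Mᴴ := by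
    rw [_root_.map_mul, ← map_star]
    congr 1
    rw [Matrix.star_eq_conjTranspose, Matrix.conjTranspose_conjTranspose]
  rw [h1, ContinuousLinearMap.mul_apply, ContinuousLinearMap.star_eq_adjoint,
    ContinuousLinearMap.adjoint_inner_left, inner_self_eq_norm_sq]

lemma re_inner_ECLM_le (M : Matrix (Fin k) (Fin k) ℂ) (ξ : EuclideanSpace ℂ (Fin k)) :
    RCLike.re (⟪(ECLM M) ξ, ξ⟫_ℂ) ≤ opNorm M * ‖ξ‖ ^ 2 := by
  calc RCLike.re (⟪(ECLM M) ξ, ξ⟫_ℂ) ≤ ‖(⟪(ECLM M) ξ, ξ⟫_ℂ)‖ := RCLike.re_le_norm _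
    _ ≤ ‖(ECLM M) ξ‖ * ‖ξ‖ := norm_inner_le_norm _ _
    _ ≤ (‖ECLM M‖ * ‖ξ‖) * ‖ξ‖ := by
        have := (ECLM M).le_opNorm ξ
        have h0 : (0:ℝ) ≤ ‖ξ‖ := norm_nonneg _
        nlinarith [norm_nonneg ((ECLM M) ξ)]
    _ = opNorm M * ‖ξ‖ ^ 2 := by rw [opNorm_eq]; ring

/-- The key Popescu-type estimate: for any finite set of words of common length `n`,
`∑ ‖(X^w)* ξ‖² ≤ ‖Σ XⱼXⱼ*‖ⁿ ‖ξ‖²`. -/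
lemma sum_wordEval_sq_le (X : Fin d → Matrix (Fin k) (Fin k) ℂ) :
    ∀ (n : ℕ) (s : Finset (Word d)), (∀ w ∈ s, w.toList.length = n) →
    ∀ ξ : EuclideanSpace ℂ (Fin k),
      ∑ w ∈ s, ‖ECLM (wordEval X w)ᴴ ξ‖ ^ 2 ≤ (opNorm (∑ j, X j * (X j)ᴴ)) ^ n * ‖ξ‖ ^ 2 := by
  classical
  intro n
  induction n with
  | zero =>
    intro s hs ξ
    have hsub : s ⊆ {1} := by
      intro w hw
      have := hs w hw
      have hnil : w.toList = [] := List.length_eq_zero_iff.mp this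
      have : w = 1 := by
        apply FreeMonoid.toList.injective
        simpa using hnil
      simp [this]
    calc ∑ w ∈ s, ‖ECLM (wordEval X w)ᴴ ξ‖ ^ 2
        ≤ ∑ w ∈ ({1} : Finset (Word d)), ‖ECLM (wordEval X w)ᴴ ξ‖ ^ 2 :=
          Finset.sum_le_sum_of_subset_of_nonneg hsub (fun _ _ _ => by positivity)
      _ = ‖ξ‖ ^ 2 := by
          simp [wordEval, FreeMonoid.toList_one]
      _ ≤ (opNorm (∑ j, X j * (X j)ᴴ)) ^ 0 * ‖ξ‖ ^ 2 := by simp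
  | succ n ih =>
    intro s hs ξ
    set r2 := opNorm (∑ j, X j * (X j)ᴴ) with hr2def
    have hr2 : 0 ≤ r2 := norm_nonneg _
    rw [← Finset.sum_fiberwise_of_maps_to
      (g := fun w : Word d => w.toList.head?) (t := (Finset.univ : Finset (Option (Fin d))))
      (fun i _ => Finset.mem_univ _) _]
    have hfib : ∀ o : Option (Fin d),
        ∑ w ∈ s.filter (fun w => w.toList.head? = o), ‖ECLM (wordEval X w)ᴴ ξ‖ ^ 2 ≤
          o.elim 0 (fun j => r2 ^ n * ‖ECLM ((X j)ᴴ) ξ‖ ^ 2) := by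
      intro o
      match o with
      | none =>
        have : s.filter (fun w => w.toList.head? = none) = ∅ := by
          apply Finset.filter_false_of_mem
          intro w hw hno
          have h1 := hs w hw
          have : w.toList = [] := List.head?_eq_none_iff.mp hno
          rw [this] at h1
          simp at h1
        rw [this, Finset.sum_empty]
        simp
      | some j =>
        classical
        -- every word in the fiber decomposes as `of j * tail`
        have hdec : ∀ w ∈ s.filter (fun w => w.toList.head? = some j),
            w = FreeMonoid.of j * FreeMonoid.ofList w.toList.tail := by
          intro w hw
          rcases Finset.mem_filter.mp hw with ⟨_, hhd⟩
          apply FreeMonoid.toList.injective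
          rw [FreeMonoid.toList_of_mul, FreeMonoid.toList_ofList]
          cases hl : w.toList with
          | nil => rw [hl] at hhd; simp at hhd
          | cons a l =>
            rw [hl] at hhd
            simp at hhd
            simp [hhd]
        set η := ECLM ((X j)ᴴ) ξ with hη
        have hterm : ∀ w ∈ s.filter (fun w => w.toList.head? = some j),
            ‖ECLM (wordEval X w)ᴴ ξ‖ ^ 2 =
            ‖ECLM (wordEval X (FreeMonoid.ofList w.toList.tail))ᴴ η‖ ^ 2 := by
          intro w hw
          conv_lhs => rw [hdec w hw]
          rw [wordEval_of_mul, Matrix.conjTranspose_mul, _root_.map_mul,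
            ContinuousLinearMap.mul_apply]
        rw [Finset.sum_congr rfl hterm]
        have hinj : ∀ x ∈ s.filter (fun w => w.toList.head? = some j),
            ∀ y ∈ s.filter (fun w => w.toList.head? = some j),
            FreeMonoid.ofList x.toList.tail = FreeMonoid.ofList y.toList.tail → x = y := by
          intro x hx y hy hxy
          rw [hdec x hx, hdec y hy, hxy]
        have himg := Finset.sum_image
          (f := fun t : Word d => ‖ECLM (wordEval X t)ᴴ η‖ ^ 2)
          (g := fun w : Word d => FreeMonoid.ofList (FreeMonoid.toList w).tail)
          (s := s.filter (fun w => w.toList.head? = some j)) hinj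
        rw [← himg]
        have hlen : ∀ t ∈ (s.filter (fun w => w.toList.head? = some j)).image
            (fun w => FreeMonoid.ofList w.toList.tail), t.toList.length = n := by
          intro t ht
          rcases Finset.mem_image.mp ht with ⟨w, hw, rfl⟩
          rcases Finset.mem_filter.mp hw with ⟨hws, hhd⟩
          have h1 := hs w hws
          rw [FreeMonoid.toList_ofList, List.length_tail, h1]
          simp
        exact ih _ hlen η
    calc ∑ o : Option (Fin d), ∑ w ∈ s.filter (fun w => w.toList.head? = o),
          ‖ECLM (wordEval X w)ᴴ ξ‖ ^ 2
        ≤ ∑ o : Option (Fin d), o.elim 0 (fun j => r2 ^ n * ‖ECLM ((X j)ᴴ) ξ‖ ^ 2) :=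
          Finset.sum_le_sum (fun o _ => hfib o)
      _ = r2 ^ n * ∑ j, ‖ECLM ((X j)ᴴ) ξ‖ ^ 2 := by
          rw [Fintype.sum_option]
          simp [Finset.mul_sum]
      _ ≤ r2 ^ n * (r2 * ‖ξ‖ ^ 2) := by
          apply mul_le_mul_of_nonneg_left _ (pow_nonneg hr2 n)
          have hsum : ∑ j, ‖ECLM ((X j)ᴴ) ξ‖ ^ 2 =
              RCLike.re (⟪(ECLM (∑ j, X j * (X j)ᴴ)) ξ, ξ⟫_ℂ) := by
            rw [map_sum]
            rw [ContinuousLinearMap.sum_apply, sum_inner, map_sum]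
            exact Finset.sum_congr rfl (fun j _ => norm_ECLM_ct_apply_sq (X j) ξ)
          rw [hsum]
          exact re_inner_ECLM_le _ ξ
      _ = r2 ^ (n + 1) * ‖ξ‖ ^ 2 := by ring
/-- Evaluation as an algebra homomorphism. -/
def evalAlgHom (X : Fin d → Matrix (Fin k) (Fin k) ℂ) :
    FreePoly d →ₐ[ℂ] Matrix (Fin k) (Fin k) ℂ :=
  MonoidAlgebra.lift ℂ (Matrix (Fin k) (Fin k) ℂ) (Word d) (FreeMonoid.lift X)

lemma eval_eq_evalAlgHom (q : FreePoly d) (X : Fin d → Matrix (Fin k) (Fin k) ℂ) :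
    q.eval X = evalAlgHom X q := by
  rw [evalAlgHom, MonoidAlgebra.lift_apply, FreePoly.eval]
  apply Finsupp.sum_congr
  intro w _
  rw [FreeMonoid.lift_apply]
  rfl

lemma normSq_filter_le (q : FreePoly d) (P : Word d → Prop) [DecidablePred P] :
    ∑ w ∈ q.coeff.support.filter P, ‖q.coeff w‖ ^ 2 ≤ q.normSq := by
  rw [FreePoly.normSq, Finsupp.sum]
  exact Finset.sum_le_sum_of_subset_of_nonneg (Finset.filter_subset _ _)
    (fun _ _ _ => by positivity)

/-- The master estimate: on a strict row contraction,
`‖q(X)‖ ≤ (1 - √‖ΣXⱼXⱼ*‖)⁻¹ · ‖q‖₂`. -/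
lemma eval_norm_le (X : Fin d → Matrix (Fin k) (Fin k) ℂ)
    (hX : opNorm (∑ j, X j * (X j)ᴴ) < 1) (q : FreePoly d) :
    ‖ECLM (q.eval X)‖ ≤ (1 - Real.sqrt (opNorm (∑ j, X j * (X j)ᴴ)))⁻¹ * q.norm2 := by
  classical
  set r2 := opNorm (∑ j, X j * (X j)ᴴ) with hr2def
  have hr2 : 0 ≤ r2 := norm_nonneg _
  set t := Real.sqrt r2 with htdef
  have ht0 : 0 ≤ t := Real.sqrt_nonneg _
  have ht1 : t < 1 := by
    have := Real.sqrt_lt_sqrt hr2 hX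
    rwa [Real.sqrt_one] at this
  have hC0 : (0:ℝ) < (1 - t)⁻¹ := by
    apply inv_pos.2; linarith
  have hq0 : 0 ≤ q.norm2 := Real.sqrt_nonneg _
  have ht2 : t ^ 2 = r2 := Real.sq_sqrt hr2
  -- bound the conjugate transpose applied to a vector
  have hvec : ∀ ξ : EuclideanSpace ℂ (Fin k),
      ‖ECLM ((q.eval X)ᴴ) ξ‖ ≤ ((1 - t)⁻¹ * q.norm2) * ‖ξ‖ := by
    intro ξ
    set N := q.coeff.support.sup (fun w => w.toList.length) with hN
    have hsplit : q.eval X = ∑ n ∈ Finset.range (N+1),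
        ∑ w ∈ q.coeff.support.filter (fun w => w.toList.length = n), q.coeff w • wordEval X w := by
      rw [FreePoly.eval, Finsupp.sum]
      exact (Finset.sum_fiberwise_of_maps_to
        (fun w hw => Finset.mem_range.2 (Nat.lt_succ_of_le (Finset.le_sup hw))) _).symm
    have hpern : ∀ n : ℕ,
        ‖ECLM ((∑ w ∈ q.coeff.support.filter (fun w => w.toList.length = n),
            q.coeff w • wordEval X w)ᴴ) ξ‖ ≤ (q.norm2 * t ^ n) * ‖ξ‖ := by
      intro n
      set sn := q.coeff.support.filter (fun w => w.toList.length = n) with hsn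
      have h1 : ECLM ((∑ w ∈ sn, q.coeff w • wordEval X w)ᴴ) ξ =
          ∑ w ∈ sn, star (q.coeff w) • (ECLM ((wordEval X w)ᴴ) ξ) := by
        rw [Matrix.conjTranspose_sum, map_sum, ContinuousLinearMap.sum_apply]
        apply Finset.sum_congr rfl
        intro w _
        rw [Matrix.conjTranspose_smul, _root_.map_smul, ContinuousLinearMap.smul_apply]
      rw [h1]
      calc ‖∑ w ∈ sn, star (q.coeff w) • (ECLM ((wordEval X w)ᴴ) ξ)‖
          ≤ ∑ w ∈ sn, ‖q.coeff w‖ * ‖ECLM ((wordEval X w)ᴴ) ξ‖ := by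
            refine le_trans (norm_sum_le _ _) (Finset.sum_le_sum fun w _ => ?_)
            rw [norm_smul, norm_star]
        _ ≤ Real.sqrt (∑ w ∈ sn, ‖q.coeff w‖ ^ 2) *
            Real.sqrt (∑ w ∈ sn, ‖ECLM ((wordEval X w)ᴴ) ξ‖ ^ 2) := by
            have hcs := Finset.sum_mul_sq_le_sq_mul_sq sn (fun w => ‖q.coeff w‖)
              (fun w => ‖ECLM ((wordEval X w)ᴴ) ξ‖)
            have hnn : (0:ℝ) ≤ ∑ w ∈ sn, ‖q.coeff w‖ * ‖ECLM ((wordEval X w)ᴴ) ξ‖ :=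
              Finset.sum_nonneg fun w _ => mul_nonneg (norm_nonneg _) (norm_nonneg _)
            have := Real.sqrt_le_sqrt hcs
            rwa [Real.sqrt_sq hnn, Real.sqrt_mul (Finset.sum_nonneg
              fun w _ => by positivity)] at this
        _ ≤ q.norm2 * Real.sqrt (r2 ^ n * ‖ξ‖ ^ 2) := by
            apply mul_le_mul
            · exact Real.sqrt_le_sqrt (normSq_filter_le q _)
            · apply Real.sqrt_le_sqrt
              exact sum_wordEval_sq_le X n sn (fun w hw => (Finset.mem_filter.mp hw).2) ξ
            · exact Real.sqrt_nonneg _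
            · exact hq0
        _ = (q.norm2 * t ^ n) * ‖ξ‖ := by
            rw [Real.sqrt_mul (pow_nonneg hr2 n), Real.sqrt_sq (norm_nonneg ξ)]
            have : Real.sqrt (r2 ^ n) = t ^ n := by
              rw [← ht2, ← pow_mul, mul_comm 2 n, pow_mul]
              exact Real.sqrt_sq (pow_nonneg ht0 n)
            rw [this]; ring
    have hgeom : ∑ n ∈ Finset.range (N+1), t ^ n ≤ (1 - t)⁻¹ := by
      rw [inv_eq_one_div, le_div_iff₀ (by linarith : (0:ℝ) < 1 - t)]
      nlinarith [geom_sum_mul t (N+1), pow_nonneg ht0 (N+1)]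
    calc ‖ECLM ((q.eval X)ᴴ) ξ‖
        = ‖∑ n ∈ Finset.range (N+1), ECLM ((∑ w ∈ q.coeff.support.filter
            (fun w => w.toList.length = n), q.coeff w • wordEval X w)ᴴ) ξ‖ := by
          rw [hsplit, Matrix.conjTranspose_sum, map_sum, ContinuousLinearMap.sum_apply]
      _ ≤ ∑ n ∈ Finset.range (N+1), ‖ECLM ((∑ w ∈ q.coeff.support.filter
            (fun w => w.toList.length = n), q.coeff w • wordEval X w)ᴴ) ξ‖ := norm_sum_le _ _
      _ ≤ ∑ n ∈ Finset.range (N+1), (q.norm2 * t ^ n) * ‖ξ‖ :=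
          Finset.sum_le_sum fun n _ => hpern n
      _ = (q.norm2 * ∑ n ∈ Finset.range (N+1), t ^ n) * ‖ξ‖ := by
          rw [Finset.mul_sum, Finset.sum_mul]
      _ ≤ ((1 - t)⁻¹ * q.norm2) * ‖ξ‖ := by
          have : q.norm2 * ∑ n ∈ Finset.range (N+1), t ^ n ≤ (1 - t)⁻¹ * q.norm2 := by
            rw [mul_comm ((1-t)⁻¹)]
            exact mul_le_mul_of_nonneg_left hgeom hq0
          exact mul_le_mul_of_nonneg_right this (norm_nonneg _)
  have hstar : ECLM ((q.eval X)ᴴ) = star (ECLM (q.eval X)) := by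
    rw [← map_star]
    congr 1
  calc ‖ECLM (q.eval X)‖ = ‖ECLM ((q.eval X)ᴴ)‖ := by
        rw [hstar, ContinuousLinearMap.star_eq_adjoint]
        exact (LinearIsometryEquiv.norm_map ContinuousLinearMap.adjoint _).symm
    _ ≤ (1 - t)⁻¹ * q.norm2 :=
      ContinuousLinearMap.opNorm_le_bound _ (by positivity) hvec

end AuxProof
/-- If `‖p_n f − 1‖₂ → 0` for some sequence of free polynomials `p_n`, then `f` is
nonsingular in the row ball. -/
theorem nonsingular_is_necessary {d : ℕ} (f : FreePoly d) (p : ℕ → FreePoly d)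
    (hconv : Filter.Tendsto (fun n => FreePoly.norm2 (p n * f - 1)) Filter.atTop (nhds 0)) :
    ∀ k : ℕ, 1 ≤ k → ∀ X : Fin d → Matrix (Fin k) (Fin k) ℂ,
      IsStrictRowContraction X → IsUnit (f.eval X) := by
  intro k _ X hX
  classical
  have hX' : opNorm (∑ j, X j * (X j)ᴴ) < 1 := hX
  set C := (1 - Real.sqrt (opNorm (∑ j, X j * (X j)ᴴ)))⁻¹ with hC
  have hsq1 : Real.sqrt (opNorm (∑ j, X j * (X j)ᴴ)) < 1 := by
    have := Real.sqrt_lt_sqrt (norm_nonneg _) hX'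
    rwa [Real.sqrt_one] at this
  have hten : Filter.Tendsto (fun n => C * FreePoly.norm2 (p n * f - 1))
      Filter.atTop (nhds 0) := by
    simpa using hconv.const_mul C
  obtain ⟨n, hn⟩ := (hten.eventually (gt_mem_nhds one_pos)).exists
  have hlt : ‖ECLM ((p n * f - 1).eval X)‖ < 1 :=
    lt_of_le_of_lt (eval_norm_le X hX' (p n * f - 1)) hn
  have heq : (p n).eval X * f.eval X = 1 + (p n * f - 1).eval X := by
    rw [eval_eq_evalAlgHom, eval_eq_evalAlgHom, eval_eq_evalAlgHom, map_sub, _root_.map_mul,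
      _root_.map_one]
    rw [add_sub_cancel]
  have hunit : IsUnit (ECLM ((p n).eval X * f.eval X)) := by
    rw [heq, map_add, _root_.map_one]
    have h2 : ‖-(ECLM ((p n * f - 1).eval X))‖ < 1 := by rwa [norm_neg]
    have := isUnit_one_sub_of_norm_lt_one h2
    rwa [sub_neg_eq_add] at this
  have hmat : IsUnit ((p n).eval X * f.eval X) := by
    have := hunit.map (ECLM (k := k)).symm
    simpa using this
  rw [Matrix.isUnit_iff_isUnit_det, Matrix.det_mul] at hmat
  exact (Matrix.isUnit_iff_isUnit_det _).mpr (isUnit_of_mul_isUnit_right hmat)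
end
end
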